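/- arXiv:1511.01025 — 2 statements merged into one kernel-verified Lean document; each statement's English description precedes it below -/
import Mathlib

section
/- A finite simple graph G is a proper color-line graph if and only if the vertex set of G admits a partition into cliques, V(G) = ⋃_{Q ∈ C} Q, such that the graph obtained from G by deleting, for every Q ∈ C, all edges with both endpoints in Q is a line graph. -/
open SimpleGraph

/-- The color-line graph `CL(H)` of an edge-colored graph `(H, φ)`: vertices are the edges
of `H`, and two distinct edges are adjacent iff they share an endpoint or have equal colors. -/
def colorLineGraph {V C : Type*} (H : SimpleGraph V) (φ : H.edgeSet → C) :
    SimpleGraph H.edgeSet where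
  Adj e f := e ≠ f ∧
    ((∃ v, v ∈ (e : Sym2 V) ∧ v ∈ (f : Sym2 V)) ∨ φ e = φ f)
  symm := by
    refine ⟨?_⟩
    rintro e f ⟨hne, h⟩
    refine ⟨hne.symm, ?_⟩
    rcases h with ⟨v, hv1, hv2⟩ | h
    · exact Or.inl ⟨v, hv2, hv1⟩
    · exact Or.inr h.symm
  loopless := by refine ⟨?_⟩; rintro e ⟨hne, -⟩; exact hne rfl

/-- An edge coloring is proper if distinct edges sharing an endpoint get distinct colors. -/
def IsProperEdgeColoring {V C : Type*} (H : SimpleGraph V) (φ : H.edgeSet → C) : Prop :=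
  ∀ e f : H.edgeSet, e ≠ f → (∃ v, v ∈ (e : Sym2 V) ∧ v ∈ (f : Sym2 V)) → φ e ≠ φ f

/-- `G` is a color-line graph: `G ≅ CL(H)` for some finite edge-colored graph `H`. -/
def IsColorLineGraph {α : Type*} (G : SimpleGraph α) : Prop :=
  ∃ (V C : Type) (_ : Fintype V) (H : SimpleGraph V) (φ : H.edgeSet → C),
    Nonempty (G ≃g colorLineGraph H φ)

/-- `G` is a proper color-line graph: `G ≅ CL(H)` for some finite properly
edge-colored graph `H`. -/
def IsProperColorLineGraph {α : Type*} (G : SimpleGraph α) : Prop :=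
  ∃ (V C : Type) (_ : Fintype V) (H : SimpleGraph V) (φ : H.edgeSet → C),
    IsProperEdgeColoring H φ ∧ Nonempty (G ≃g colorLineGraph H φ)

/-- `G` is a `k`-color-line graph: `G ≅ CL(H)` for some finite graph `H`
edge-colored with at most `k` colors. -/
def IsKColorLineGraph (k : ℕ) {α : Type*} (G : SimpleGraph α) : Prop :=
  ∃ (V : Type) (_ : Fintype V) (H : SimpleGraph V) (φ : H.edgeSet → Fin k),
    Nonempty (G ≃g colorLineGraph H φ)

/-- `G` is a proper `k`-color-line graph: `G ≅ CL(H)` for some finite graph `H`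
properly edge-colored with at most `k` colors. -/
def IsProperKColorLineGraph (k : ℕ) {α : Type*} (G : SimpleGraph α) : Prop :=
  ∃ (V : Type) (_ : Fintype V) (H : SimpleGraph V) (φ : H.edgeSet → Fin k),
    IsProperEdgeColoring H φ ∧ Nonempty (G ≃g colorLineGraph H φ)

/-- `G` is a line graph: `G ≅ L(H)` for some finite graph `H`. -/
def IsLineGraph {α : Type*} (G : SimpleGraph α) : Prop :=
  ∃ (V : Type) (_ : Fintype V) (H : SimpleGraph V), Nonempty (G ≃g H.lineGraph)

/-- A graph is a proper color-line graph iff its vertex set has a partition into cliques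
such that deleting all edges inside the parts leaves a line graph. -/
theorem properColorLine_iff_cliquePartition {α : Type} [Fintype α] (G : SimpleGraph α) :
    IsProperColorLineGraph G ↔
      ∃ 𝒞 : Set (Set α),
        (∀ Q ∈ 𝒞, G.IsClique Q) ∧
        (∀ v : α, ∃! Q, Q ∈ 𝒞 ∧ v ∈ Q) ∧
        IsLineGraph (G.deleteEdges {e : Sym2 α | ∃ Q ∈ 𝒞, ∀ x ∈ e, x ∈ Q}) := by
  constructor
  · rintro ⟨V, C, _, H, φ, hprop, ⟨ψ⟩⟩
    set f : α → C := fun v => φ (ψ v) with hf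
    refine ⟨Set.range (fun v => f ⁻¹' {f v}), ?_, ?_, ?_⟩
    · rintro Q ⟨w, rfl⟩ u hu v hv huv
      have : (colorLineGraph H φ).Adj (ψ u) (ψ v) :=
        ⟨fun h => huv (ψ.injective (Subtype.ext (congrArg _ h))), Or.inr (hu.trans hv.symm)⟩
      exact ψ.map_rel_iff.mp this
    · intro v
      refine ⟨f ⁻¹' {f v}, ⟨⟨v, rfl⟩, rfl⟩, ?_⟩
      rintro Q ⟨⟨w, rfl⟩, hv⟩
      have : f v = f w := hv
      simp [this]
    · have hS : ∀ u v : α, (s(u, v) ∈ {e : Sym2 α |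
          ∃ Q ∈ Set.range (fun v => f ⁻¹' {f v}), ∀ x ∈ e, x ∈ Q}) ↔ f u = f v := by
        intro u v
        constructor
        · rintro ⟨Q, ⟨w, rfl⟩, hall⟩
          have hu : f u = f w := hall u (by simp)
          have hv : f v = f w := hall v (by simp)
          exact hu.trans hv.symm
        · intro h
          refine ⟨f ⁻¹' {f u}, ⟨u, rfl⟩, ?_⟩
          intro x hx
          rcases Sym2.mem_iff.mp hx with rfl | rfl
          · rfl
          · exact h.symm
      refine ⟨V, ‹_›, H, ⟨⟨ψ.toEquiv, ?_⟩⟩⟩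
      intro u v
      rw [lineGraph_adj_iff_exists, deleteEdges_adj, hS]
      constructor
      · rintro ⟨hne, hsh⟩
        have hne' : u ≠ v := fun h => hne (by rw [h])
        have hadj : (colorLineGraph H φ).Adj (ψ u) (ψ v) := ⟨hne, Or.inl hsh⟩
        exact ⟨ψ.map_rel_iff.mp hadj, hprop _ _ hne hsh⟩
      · rintro ⟨hadj, hcol⟩
        have h2 := ψ.map_rel_iff.mpr hadj
        rcases h2 with ⟨hne, hsh | hcl⟩
        · exact ⟨hne, hsh⟩
        · exact absurd hcl hcol
  · rintro ⟨𝒞, hclq, huniq, V, _, H, ⟨ψ⟩⟩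
    set S : Set (Sym2 α) := {e : Sym2 α | ∃ Q ∈ 𝒞, ∀ x ∈ e, x ∈ Q} with hSdef
    have hpart : ∀ v : α, (huniq v).choose ∈ 𝒞 ∧ v ∈ (huniq v).choose :=
      fun v => (huniq v).choose_spec.1
    set part : α → {Q // Q ∈ 𝒞} := fun v => ⟨(huniq v).choose, (hpart v).1⟩ with hpartdef
    have hmem : ∀ v : α, v ∈ (part v : Set α) := fun v => (hpart v).2
    have hkey : ∀ u v : α, s(u, v) ∈ S ↔ part u = part v := by
      intro u v
      constructor
      · rintro ⟨Q, hQ, hall⟩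
        have h1 : (part u : Set α) = Q :=
          ((huniq u).choose_spec.2 Q ⟨hQ, hall u (by simp)⟩).symm
        have h2 : (part v : Set α) = Q :=
          ((huniq v).choose_spec.2 Q ⟨hQ, hall v (by simp)⟩).symm
        exact Subtype.ext (h1.trans h2.symm)
      · intro h
        refine ⟨(part u : Set α), (part u).2, ?_⟩
        intro x hx
        rcases Sym2.mem_iff.mp hx with rfl | rfl
        · exact hmem x
        · rw [h]; exact hmem x
    refine ⟨V, {Q // Q ∈ 𝒞}, ‹_›, H, fun e => part (ψ.symm e), ?_, ?_⟩
    · intro e f hne hsh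
      have hadj : H.lineGraph.Adj e f := lineGraph_adj_iff_exists.mpr ⟨hne, hsh⟩
      have h2 : (G.deleteEdges S).Adj (ψ.symm e) (ψ.symm f) := ψ.symm.map_rel_iff.mpr hadj
      rw [deleteEdges_adj] at h2
      intro hcol
      exact h2.2 ((hkey _ _).mpr hcol)
    · refine ⟨⟨ψ.toEquiv, ?_⟩⟩
      intro u v
      show (colorLineGraph H (fun e => part (ψ.symm e))).Adj (ψ u) (ψ v) ↔ G.Adj u v
      have hφu : part (ψ.symm (ψ u)) = part u := by simp
      have hφv : part (ψ.symm (ψ v)) = part v := by simp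
      constructor
      · rintro ⟨hne, hsh | hcl⟩
        · have hadj : H.lineGraph.Adj (ψ u) (ψ v) := lineGraph_adj_iff_exists.mpr ⟨hne, hsh⟩
          exact ((deleteEdges_adj).mp (ψ.map_rel_iff.mp hadj)).1
        · have hcl' : part u = part v := by simpa using hcl
          have hne' : u ≠ v := fun h => hne (by rw [h])
          exact hclq _ (part u).2 (hmem u) (by rw [hcl']; exact hmem v) hne'
      · intro hadj
        have hne' : u ≠ v := hadj.ne
        have hne : ψ u ≠ ψ v := fun h => hne' (ψ.injective h)
        by_cases hs : s(u, v) ∈ S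
        · exact ⟨hne, Or.inr (by simpa using (hkey u v).mp hs)⟩
        · have h2 : (G.deleteEdges S).Adj u v := deleteEdges_adj.mpr ⟨hadj, hs⟩
          have h3 := ψ.map_rel_iff.mpr h2
          rcases lineGraph_adj_iff_exists.mp h3 with ⟨_, hsh⟩
          exact ⟨hne, Or.inl hsh⟩
end

section
/- For every integer k ≥ 1 and every finite simple graph G: G is a proper k-color-line graph if and only if the graph G + K1, obtained from G by adding one new isolated vertex, is a proper (k+1)-color-line graph. -/
open SimpleGraph

-- forward construction
def addEdgeGraph {V : Type*} (H : SimpleGraph V) : SimpleGraph (V ⊕ Bool) where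
  Adj x y := match x, y with
    | Sum.inl a, Sum.inl b => H.Adj a b
    | Sum.inr a, Sum.inr b => a ≠ b
    | _, _ => False
  symm := by
    refine ⟨?_⟩
    rintro (a|a) (b|b) h
    · exact h.symm
    · exact h.elim
    · exact h.elim
    · exact fun hh => h hh.symm
  loopless := by refine ⟨?_⟩; rintro (a|a) h <;> simp_all

@[simp] lemma addEdgeGraph_adj_inl {V : Type*} (H : SimpleGraph V) (a b : V) :
    (addEdgeGraph H).Adj (Sum.inl a) (Sum.inl b) ↔ H.Adj a b := Iff.rfl

lemma addEdgeGraph_classify {V : Type*} (H : SimpleGraph V) (e : Sym2 (V ⊕ Bool))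
    (he : e ∈ (addEdgeGraph H).edgeSet) :
    (∃ f ∈ H.edgeSet, e = Sym2.map Sum.inl f) ∨ e = s(Sum.inr true, Sum.inr false) := by
  induction e with
  | _ x y =>
    rw [mem_edgeSet] at he
    match x, y with
    | Sum.inl a, Sum.inl b =>
      exact Or.inl ⟨s(a, b), he, by simp⟩
    | Sum.inr a, Sum.inr b =>
      have : a ≠ b := he
      right
      match a, b with
      | true, false => rfl
      | false, true => exact Sym2.eq_swap
    | Sum.inl a, Sum.inr b => exact absurd he (by simp [addEdgeGraph])
    | Sum.inr a, Sum.inl b => exact absurd he (by simp [addEdgeGraph])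

lemma sym2_map_inl_mem {V : Type*} (H : SimpleGraph V) (f : Sym2 V) (hf : f ∈ H.edgeSet) :
    Sym2.map Sum.inl f ∈ (addEdgeGraph H).edgeSet := by
  induction f with
  | _ x y => exact hf

lemma special_mem {V : Type*} (H : SimpleGraph V) :
    s(Sum.inr true, Sum.inr false) ∈ (addEdgeGraph H).edgeSet := by
  rw [mem_edgeSet]; exact fun h => Bool.noConfusion h

lemma map_inl_ne_special' {V : Type*} (f : Sym2 V) :
    Sym2.map Sum.inl f ≠ s(Sum.inr true, Sum.inr false) := by
  induction f with
  | _ x y => simp [Sym2.eq_iff]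

noncomputable def addEdgeEquiv {V : Type*} (H : SimpleGraph V) :
    H.edgeSet ⊕ Unit ≃ (addEdgeGraph H).edgeSet := by
  refine Equiv.ofBijective
    (fun x => Sum.elim
      (fun (f : H.edgeSet) => ⟨Sym2.map Sum.inl (f : Sym2 V), sym2_map_inl_mem H _ f.2⟩)
      (fun _ => ⟨s(Sum.inr true, Sum.inr false), special_mem H⟩) x) ⟨?_, ?_⟩
  · rintro (f | u) (g | u') h <;> simp only [Sum.elim_inl, Sum.elim_inr, Subtype.mk.injEq] at h
    · exact congrArg Sum.inl (Subtype.ext (Sym2.map.injective Sum.inl_injective h))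
    · exact absurd h (map_inl_ne_special' _)
    · exact absurd h.symm (map_inl_ne_special' _)
    · rfl
  · rintro ⟨e, he⟩
    rcases addEdgeGraph_classify H e he with ⟨f, hf, rfl⟩ | rfl
    · exact ⟨Sum.inl ⟨f, hf⟩, rfl⟩
    · exact ⟨Sum.inr (), rfl⟩

noncomputable def addEdgeColor {V : Type*} (H : SimpleGraph V) {k : ℕ} (φ : H.edgeSet → Fin k) :
    (addEdgeGraph H).edgeSet → Fin (k + 1) :=
  fun e => Sum.elim (fun f => (φ f).castSucc) (fun _ => Fin.last k) ((addEdgeEquiv H).symm e)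

@[simp] lemma addEdgeColor_inl {V : Type*} (H : SimpleGraph V) {k : ℕ}
    (φ : H.edgeSet → Fin k) (f : H.edgeSet) :
    addEdgeColor H φ (addEdgeEquiv H (Sum.inl f)) = (φ f).castSucc := by
  simp [addEdgeColor]

@[simp] lemma addEdgeColor_inr {V : Type*} (H : SimpleGraph V) {k : ℕ}
    (φ : H.edgeSet → Fin k) (u : Unit) :
    addEdgeColor H φ (addEdgeEquiv H (Sum.inr u)) = Fin.last k := by
  simp [addEdgeColor]

@[simp] lemma coe_addEdgeEquiv_inl {V : Type*} (H : SimpleGraph V) (f : H.edgeSet) :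
    (addEdgeEquiv H (Sum.inl f) : Sym2 (V ⊕ Bool)) = Sym2.map Sum.inl (f : Sym2 V) := by
  exact rfl

@[simp] lemma coe_addEdgeEquiv_inr {V : Type*} (H : SimpleGraph V) (u : Unit) :
    (addEdgeEquiv H (Sum.inr u) : Sym2 (V ⊕ Bool)) = s(Sum.inr true, Sum.inr false) := by
  exact rfl

lemma shared_of_map_inl {V : Type*} (f g : Sym2 V)
    (h : ∃ v, v ∈ Sym2.map Sum.inl f ∧ v ∈ Sym2.map (Sum.inl : V → V ⊕ Bool) g) :
    ∃ w, w ∈ f ∧ w ∈ g := by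
  obtain ⟨v, hv1, hv2⟩ := h
  obtain ⟨w, hw, rfl⟩ := Sym2.mem_map.1 hv1
  obtain ⟨w', hw', hww⟩ := Sym2.mem_map.1 hv2
  exact ⟨w, hw, Sum.inl_injective hww ▸ hw'⟩

lemma addEdgeColor_proper {V : Type*} (H : SimpleGraph V) {k : ℕ} (φ : H.edgeSet → Fin k)
    (hφ : IsProperEdgeColoring H φ) :
    IsProperEdgeColoring (addEdgeGraph H) (addEdgeColor H φ) := by
  intro e f hne hshare
  obtain ⟨x, rfl⟩ := (addEdgeEquiv H).surjective e
  obtain ⟨y, rfl⟩ := (addEdgeEquiv H).surjective f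
  match x, y with
  | Sum.inl f₁, Sum.inl f₂ =>
    simp only [addEdgeColor_inl]
    intro hc
    have hc' : φ f₁ = φ f₂ := Fin.castSucc_injective _ hc
    have hne' : f₁ ≠ f₂ := fun h => hne (by rw [h])
    refine hφ f₁ f₂ hne' ?_ hc'
    simp only [coe_addEdgeEquiv_inl] at hshare
    exact shared_of_map_inl _ _ hshare
  | Sum.inl f₁, Sum.inr u =>
    simp only [addEdgeColor_inl, addEdgeColor_inr]
    exact (Fin.castSucc_lt_last _).ne
  | Sum.inr u, Sum.inl f₂ =>
    simp only [addEdgeColor_inl, addEdgeColor_inr]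
    exact (Fin.castSucc_lt_last _).ne'
  | Sum.inr u, Sum.inr u' =>
    exact absurd rfl hne

lemma special_not_adj {V : Type*} (H : SimpleGraph V) {k : ℕ} (φ : H.edgeSet → Fin k)
    (f : (addEdgeGraph H).edgeSet) :
    ¬ (colorLineGraph (addEdgeGraph H) (addEdgeColor H φ)).Adj
        (addEdgeEquiv H (Sum.inr ())) f := by
  rintro ⟨hne, hsh | hc⟩
  · obtain ⟨y, rfl⟩ := (addEdgeEquiv H).surjective f
    match y with
    | Sum.inr u => exact hne rfl
    | Sum.inl g =>
      obtain ⟨v, hv1, hv2⟩ := hsh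
      simp only [coe_addEdgeEquiv_inl, coe_addEdgeEquiv_inr, Sym2.mem_iff] at hv1 hv2
      obtain ⟨w, hw, rfl⟩ := Sym2.mem_map.1 hv2
      rcases hv1 with h | h <;> cases h
  · obtain ⟨y, rfl⟩ := (addEdgeEquiv H).surjective f
    match y with
    | Sum.inr u => exact hne rfl
    | Sum.inl g =>
      rw [addEdgeColor_inr, addEdgeColor_inl] at hc
      exact (Fin.castSucc_lt_last _).ne' hc

lemma CL_aux_forward {α : Type} [Fintype α] {k : ℕ} (G : SimpleGraph α)
    (h : IsProperKColorLineGraph k G) :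
    IsProperKColorLineGraph (k + 1) (G.map (Function.Embedding.some : α ↪ Option α)) := by
  obtain ⟨V, _, H, φ, hφ, ⟨ψ⟩⟩ := h
  refine ⟨V ⊕ Bool, inferInstance, addEdgeGraph H, addEdgeColor H φ,
    addEdgeColor_proper H φ hφ, ⟨?_⟩⟩
  refine ⟨((Equiv.optionEquivSumPUnit α : Option α ≃ α ⊕ Unit)).trans
    ((ψ.toEquiv.sumCongr (Equiv.refl Unit)).trans (addEdgeEquiv H)), ?_⟩
  rintro (a | a) (b | b)
  · constructor
    · intro h
      exact absurd h (special_not_adj H φ _)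
    · intro h
      simp [SimpleGraph.map_adj] at h
  · constructor
    · intro h
      exact absurd h (special_not_adj H φ _)
    · intro h
      rw [SimpleGraph.map_adj] at h; simp at h
  · constructor
    · intro h
      exact absurd h.symm (special_not_adj H φ _)
    · intro h
      rw [SimpleGraph.map_adj] at h; simp at h
  · show (colorLineGraph _ _).Adj (addEdgeEquiv H (Sum.inl (ψ a))) (addEdgeEquiv H (Sum.inl (ψ b)))
      ↔ (G.map _).Adj (some a) (some b)
    have hR : (G.map (Function.Embedding.some : α ↪ Option α)).Adj (some a) (some b) ↔ G.Adj a b := by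
      rw [SimpleGraph.map_adj]; simp
    rw [hR, ← ψ.map_rel_iff]
    constructor
    · rintro ⟨hne, hsh | hc⟩
      · refine ⟨fun h => hne (by rw [h]), Or.inl ?_⟩
        simp only [coe_addEdgeEquiv_inl] at hsh
        obtain ⟨w, hw1, hw2⟩ := shared_of_map_inl _ _ hsh
        exact ⟨w, hw1, hw2⟩
      · rw [addEdgeColor_inl, addEdgeColor_inl] at hc
        exact ⟨fun h => hne (by rw [h]), Or.inr (Fin.castSucc_injective _ hc)⟩
    · rintro ⟨hne, hsh | hc⟩
      · refine ⟨fun h => hne (Sum.inl_injective ((addEdgeEquiv H).injective h)), Or.inl ?_⟩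
        obtain ⟨w, hw1, hw2⟩ := hsh
        simp only [coe_addEdgeEquiv_inl]
        exact ⟨Sum.inl w, Sym2.mem_map.2 ⟨w, hw1, rfl⟩, Sym2.mem_map.2 ⟨w, hw2, rfl⟩⟩
      · exact ⟨fun h => hne (Sum.inl_injective ((addEdgeEquiv H).injective h)),
          Or.inr (by rw [addEdgeColor_inl, addEdgeColor_inl, hc])⟩

lemma CL_aux_backward {α : Type} [Fintype α] {k : ℕ} (hk : 1 ≤ k) (G : SimpleGraph α)
    (h : IsProperKColorLineGraph (k + 1) (G.map (Function.Embedding.some : α ↪ Option α))) :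
    IsProperKColorLineGraph k G := by
  obtain ⟨V, instV, H', φ', hφ', ⟨ψ⟩⟩ := h
  set e₀ : H'.edgeSet := ψ none with he₀
  have hiso : ∀ f : H'.edgeSet, ¬ (colorLineGraph H' φ').Adj e₀ f := by
    intro f hadj
    rw [show f = ψ (ψ.symm f) from (ψ.apply_symm_apply f).symm] at hadj
    have := ψ.map_rel_iff.mp hadj
    rw [SimpleGraph.map_adj] at this; simp at this
  set c₀ : Fin (k + 1) := φ' e₀ with hc₀
  have hcolor_ne : ∀ f : H'.edgeSet, f ≠ e₀ → φ' f ≠ c₀ := by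
    intro f hne hc
    exact hiso f ⟨hne.symm, Or.inr hc.symm⟩
  set H : SimpleGraph V := H'.deleteEdges {(e₀ : Sym2 V)} with hH
  have hEdge : H.edgeSet = H'.edgeSet \ {(e₀ : Sym2 V)} := SimpleGraph.edgeSet_deleteEdges _
  have hmem : ∀ f : H.edgeSet, (f : Sym2 V) ∈ H'.edgeSet ∧ (f : Sym2 V) ≠ (e₀ : Sym2 V) := by
    intro f
    have h2 := (Set.ext_iff.mp hEdge (f : Sym2 V)).mp f.2
    exact ⟨h2.1, h2.2⟩
  set ι : H.edgeSet → H'.edgeSet := fun f => ⟨(f : Sym2 V), (hmem f).1⟩ with hι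
  have hι_ne : ∀ f : H.edgeSet, ι f ≠ e₀ := by
    intro f hc
    exact (hmem f).2 (congrArg Subtype.val hc)
  have hιc : ∀ f : H.edgeSet, φ' (ι f) ≠ c₀ := fun f => hcolor_ne (ι f) (hι_ne f)
  set σ : Fin (k + 1) → Fin k := fun i =>
    if h : i = c₀ then ⟨0, hk⟩ else (Fin.exists_succAbove_eq h).choose with hσ
  have hσ_spec : ∀ i, (h : i ≠ c₀) → c₀.succAbove (σ i) = i := by
    intro i h
    simp only [hσ, dif_neg h]
    exact (Fin.exists_succAbove_eq h).choose_spec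
  have hσ_inj : ∀ i j, i ≠ c₀ → j ≠ c₀ → σ i = σ j → i = j := by
    intro i j hi hj hij
    rw [← hσ_spec i hi, ← hσ_spec j hj, hij]
  set φ : H.edgeSet → Fin k := fun f => σ (φ' (ι f)) with hφdef
  have hφ : IsProperEdgeColoring H φ := by
    intro e f hne hsh hc
    have hne' : ι e ≠ ι f := by
      intro hh
      have hv : (ι e : Sym2 V) = (ι f : Sym2 V) := Subtype.ext_iff.mp hh
      exact hne (Subtype.ext hv)
    have := hφ' (ι e) (ι f) hne' hsh
    exact this (hσ_inj _ _ (hιc e) (hιc f) hc)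
  refine ⟨V, instV, H, φ, hφ, ⟨?_⟩⟩
  have hmem' : ∀ a : α, ((ψ (some a) : Sym2 V)) ∈ H.edgeSet := by
    intro a
    rw [hEdge]
    refine ⟨(ψ (some a)).2, fun hv => ?_⟩
    have : ψ (some a) = e₀ := Subtype.ext hv
    exact absurd (ψ.toEquiv.injective this) (Option.some_ne_none a)
  set E : α → H.edgeSet := fun a => ⟨(ψ (some a) : Sym2 V), hmem' a⟩ with hE
  have hEι : ∀ a, ι (E a) = ψ (some a) := fun a => Subtype.ext rfl
  have hbij : Function.Bijective E := by
    constructor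
    · intro a b hab
      have hv : (E a : Sym2 V) = (E b : Sym2 V) := Subtype.ext_iff.mp hab
      have : ψ (some a) = ψ (some b) := Subtype.ext hv
      exact Option.some_injective _ (ψ.toEquiv.injective this)
    · intro f
      rcases ho : ψ.symm (ι f) with _ | a
      · exfalso
        apply hι_ne f
        rw [show ι f = ψ (ψ.symm (ι f)) from (ψ.apply_symm_apply (ι f)).symm, ho, he₀]
      · refine ⟨a, Subtype.ext ?_⟩
        show (ψ (some a) : Sym2 V) = (f : Sym2 V)
        rw [← ho, ψ.apply_symm_apply]
  refine ⟨Equiv.ofBijective E hbij, ?_⟩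
  intro a b
  show (colorLineGraph H φ).Adj (E a) (E b) ↔ G.Adj a b
  have hR : G.Adj a b ↔ (colorLineGraph H' φ').Adj (ψ (some a)) (ψ (some b)) := by
    rw [ψ.map_rel_iff]
    rw [SimpleGraph.map_adj]; simp
  rw [hR]
  have hval : ∀ x y : α, (E x ≠ E y) ↔ (ψ (some x) ≠ ψ (some y)) := by
    intro x y
    constructor
    · intro h hc
      have hv : (ψ (some x) : Sym2 V) = (ψ (some y) : Sym2 V) := Subtype.ext_iff.mp hc
      exact h (Subtype.ext hv)
    · intro h hc
      have hv : (E x : Sym2 V) = (E y : Sym2 V) := Subtype.ext_iff.mp hc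
      exact h (Subtype.ext hv)
  constructor
  · rintro ⟨hne, hsh | hc⟩
    · exact ⟨(hval a b).1 hne, Or.inl hsh⟩
    · refine ⟨(hval a b).1 hne, Or.inr ?_⟩
      have := hσ_inj _ _ (hιc (E a)) (hιc (E b)) hc
      rwa [hEι, hEι] at this
  · rintro ⟨hne, hsh | hc⟩
    · exact ⟨(hval a b).2 hne, Or.inl hsh⟩
    · refine ⟨(hval a b).2 hne, Or.inr ?_⟩
      show σ (φ' (ι (E a))) = σ (φ' (ι (E b)))
      rw [hEι, hEι, hc]

/-- `G` is a proper `k`-color-line graph iff `G + K₁` (adding one isolated vertex)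
is a proper `(k+1)`-color-line graph. -/
theorem properKColorLine_iff_addIsolated {α : Type} [Fintype α] (k : ℕ) (hk : 1 ≤ k)
    (G : SimpleGraph α) :
    IsProperKColorLineGraph k G ↔
      IsProperKColorLineGraph (k + 1) (G.map (Function.Embedding.some : α ↪ Option α)) := by
  exact ⟨CL_aux_forward G, CL_aux_backward hk G⟩
end
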